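/- Let H be a finite simple graph in which every vertex has even degree (an eulerian graph) with e(H) ≥ 2, let n ≥ 1, let A ∈ Sym_{2n} be the block matrix [[J_n, −J_n], [−J_n, J_n]] (J_n the n×n all-ones matrix), and let J_{2n} be the 2n×2n all-ones matrix. Then the second directional derivative of P_{H,2n} at A in the direction J_{2n} vanishes: (d²/ds²) P_{H,2n}(A + s J_{2n}) |_{s=0} = 0. -/

import Mathlib

open MeasureTheory

/-- A linear order on `Fin a × Fin b` (lexicographic), used to enumerate each edge once. -/
instance finProdLinearOrder {a b : ℕ} : LinearOrder (Fin a × Fin b) :=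
  LinearOrder.lift' (toLex : Fin a × Fin b → Fin a ×ₗ Fin b) toLex.injective

/-- The homomorphism density `t_H(W)` of a two-variable kernel `W` in a graph `H`. -/
noncomputable def homDensity {V : Type} [Fintype V] [LinearOrder V]
    (H : SimpleGraph V) [DecidableRel H.Adj] (W : ℝ → ℝ → ℝ) : ℝ :=
  ∫ x in (Set.univ.pi fun _ : V => Set.Icc (0 : ℝ) 1),
    ∏ p ∈ Finset.univ.filter (fun p : V × V => p.1 < p.2 ∧ H.Adj p.1 p.2),
      W (x p.1) (x p.2)

/-- The number of edges `e(H)` of `H`, enumerated as ordered pairs `(u,v)` with `u < v`. -/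
def edgeCount {V : Type} [Fintype V] [LinearOrder V]
    (H : SimpleGraph V) [DecidableRel H.Adj] : ℕ :=
  (Finset.univ.filter (fun p : V × V => p.1 < p.2 ∧ H.Adj p.1 p.2)).card

/-- Membership in `𝒲`: bounded symmetric measurable functions `[0,1]² → ℝ`
(defined on all of `ℝ²`). -/
def IsKernel (W : ℝ → ℝ → ℝ) : Prop :=
  Measurable (Function.uncurry W) ∧ (∀ x y, W x y = W y x) ∧ ∃ C : ℝ, ∀ x y, |W x y| ≤ C

/-- A graphon: symmetric measurable with values in `[0,1]`. -/
def IsGraphon (W : ℝ → ℝ → ℝ) : Prop :=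
  Measurable (Function.uncurry W) ∧ (∀ x y, W x y = W y x) ∧
    ∀ x y, W x y ∈ Set.Icc (0 : ℝ) 1

/-- A signed graphon: symmetric measurable with values in `[-1,1]`. -/
def IsSignedGraphon (W : ℝ → ℝ → ℝ) : Prop :=
  Measurable (Function.uncurry W) ∧ (∀ x y, W x y = W y x) ∧
    ∀ x y, W x y ∈ Set.Icc (-1 : ℝ) 1

/-- `H` is weakly norming: `W ↦ t_H(|W|)^{1/e(H)}` satisfies the triangle inequality on `𝒲`. -/
def WeaklyNorming {V : Type} [Fintype V] [LinearOrder V]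
    (H : SimpleGraph V) [DecidableRel H.Adj] : Prop :=
  ∀ U W : ℝ → ℝ → ℝ, IsKernel U → IsKernel W →
    homDensity H (fun x y => |U x y + W x y|) ^ ((edgeCount H : ℝ)⁻¹) ≤
      homDensity H (fun x y => |U x y|) ^ ((edgeCount H : ℝ)⁻¹) +
        homDensity H (fun x y => |W x y|) ^ ((edgeCount H : ℝ)⁻¹)

/-- `H` is norming: `W ↦ |t_H(W)|^{1/e(H)}` satisfies the triangle inequality on `𝒲`
and vanishes only at a.e.-zero functions. -/
def Norming {V : Type} [Fintype V] [LinearOrder V]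
    (H : SimpleGraph V) [DecidableRel H.Adj] : Prop :=
  (∀ U W : ℝ → ℝ → ℝ, IsKernel U → IsKernel W →
      |homDensity H (fun x y => U x y + W x y)| ^ ((edgeCount H : ℝ)⁻¹) ≤
        |homDensity H U| ^ ((edgeCount H : ℝ)⁻¹) +
          |homDensity H W| ^ ((edgeCount H : ℝ)⁻¹)) ∧
  (∀ W : ℝ → ℝ → ℝ, IsKernel W → homDensity H W = 0 →
      (∀ᵐ p : ℝ × ℝ ∂(volume.restrict (Set.Icc (0:ℝ) 1 ×ˢ Set.Icc (0:ℝ) 1)),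
        W p.1 p.2 = 0))

/-- The polynomial `P_{H,n}(A) = Σ_{φ : V(H) → [n]} Π_{uv ∈ E(H)} a_{φ(u)φ(v)}`. -/
noncomputable def graphPoly {V : Type} [Fintype V] [LinearOrder V]
    (H : SimpleGraph V) [DecidableRel H.Adj] {n : ℕ} (A : Matrix (Fin n) (Fin n) ℝ) : ℝ :=
  ∑ φ : V → Fin n,
    ∏ p ∈ Finset.univ.filter (fun p : V × V => p.1 < p.2 ∧ H.Adj p.1 p.2),
      A (φ p.1) (φ p.2)

/-- The graph `C_k^⋈` on `{1,…,k} × {1,2}`: `(u,i)` adjacent to `(v,j)` iff `i ≠ j` and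
`u - v ∈ {-1,0,1} (mod k)`. -/
def cycleBowtie (k : ℕ) : SimpleGraph (Fin k × Fin 2) where
  Adj p q := p.2 ≠ q.2 ∧
    (p.1 = q.1 ∨ ((p.1 : ℕ) + 1) % k = (q.1 : ℕ) ∨ ((q.1 : ℕ) + 1) % k = (p.1 : ℕ))
  symm := by
    constructor
    rintro p q ⟨h1, h2⟩
    refine ⟨h1.symm, ?_⟩
    rcases h2 with h | h | h
    · exact Or.inl h.symm
    · exact Or.inr (Or.inr h)
    · exact Or.inr (Or.inl h)
  loopless := by constructor; rintro p ⟨h1, -⟩; exact h1 rfl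

noncomputable instance (k : ℕ) : DecidableRel (cycleBowtie k).Adj :=
  fun _ _ => Classical.dec _

/-- `K_{t,t}` minus a perfect matching, on vertex set `Fin t × Fin 2`:
`(i,0)` is adjacent to `(j,1)` iff `i ≠ j`. -/
def kttMinusPM (t : ℕ) : SimpleGraph (Fin t × Fin 2) where
  Adj p q := p.2 ≠ q.2 ∧ p.1 ≠ q.1
  symm := by constructor; rintro p q ⟨h1, h2⟩; exact ⟨h1.symm, h2.symm⟩
  loopless := by constructor; rintro p ⟨h1, -⟩; exact h1 rfl

noncomputable instance (t : ℕ) : DecidableRel (kttMinusPM t).Adj :=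
  fun _ _ => Classical.dec _

/-- The Möbius ladder `K_{5,5} \ C_{10}` on `Fin 5 × Fin 2`, with parts
`a_i = (i,0)`, `b_j = (j,1)`; `a_i ~ b_j` iff `j ∉ {i, i+1} (mod 5)`. -/
def mobius : SimpleGraph (Fin 5 × Fin 2) where
  Adj p q := p.2 ≠ q.2 ∧
    ((p.2 = 0 ∧ (q.1 : ℕ) ≠ (p.1 : ℕ) ∧ (q.1 : ℕ) ≠ ((p.1 : ℕ) + 1) % 5) ∨
     (q.2 = 0 ∧ (p.1 : ℕ) ≠ (q.1 : ℕ) ∧ (p.1 : ℕ) ≠ ((q.1 : ℕ) + 1) % 5))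
  symm := by constructor; rintro p q ⟨h1, h2⟩; exact ⟨h1.symm, h2.symm⟩
  loopless := by constructor; rintro p ⟨h1, -⟩; exact h1 rfl

noncomputable instance : DecidableRel mobius.Adj := fun _ _ => Classical.dec _

/-- The block matrix `[[J_n, -J_n], [-J_n, J_n]]`. -/
def blockMat (n : ℕ) : Matrix (Fin (2*n)) (Fin (2*n)) ℝ :=
  Matrix.of fun i j => if (((i : ℕ) < n) ↔ ((j : ℕ) < n)) then 1 else -1

/-- The `m × m` all-ones matrix `J_m`. -/
def onesMat (m : ℕ) : Matrix (Fin m) (Fin m) ℝ := Matrix.of fun _ _ => 1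

/-- The step function `U_A` associated to an `n × n` matrix `A`. -/
noncomputable def stepFn (n : ℕ) (A : Matrix (Fin n) (Fin n) ℝ) : ℝ → ℝ → ℝ := fun x y =>
  if h : 0 < n ∧ x ∈ Set.Ico (0 : ℝ) 1 ∧ y ∈ Set.Ico (0 : ℝ) 1 then
    A ⟨⌊n * x⌋₊ % n, Nat.mod_lt _ h.1⟩ ⟨⌊n * y⌋₊ % n, Nat.mod_lt _ h.1⟩
  else 0

/-- The cut norm `‖W‖_□ = sup_{S,T ⊆ [0,1]} |∫_{S×T} W|`. -/
noncomputable def cutNorm (W : ℝ → ℝ → ℝ) : ℝ :=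
  sSup { r : ℝ | ∃ S T : Set ℝ, MeasurableSet S ∧ MeasurableSet T ∧
    S ⊆ Set.Icc 0 1 ∧ T ⊆ Set.Icc 0 1 ∧
    r = |∫ p in S ×ˢ T, W p.1 p.2| }


section AuxEulerian

open Finset Polynomial

/-- The sign vector: `+1` on the first block, `-1` on the second. -/
def myEps (n : ℕ) : Fin (2*n) → ℝ := fun i => if (i:ℕ) < n then 1 else -1

lemma myEps_sum (n : ℕ) : ∑ i : Fin (2*n), myEps n i = 0 := by
  unfold myEps
  rw [Fin.sum_univ_eq_sum_range (fun k => if k < n then (1:ℝ) else -1) (2*n)]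
  rw [Finset.sum_ite]
  have h1 : (Finset.range (2*n)).filter (fun k => k < n) = Finset.range n := by
    ext k; simp; omega
  have h2 : ((Finset.range (2*n)).filter (fun k => ¬ k < n)).card = n := by
    have := Finset.card_filter_add_card_filter_not
      (s := Finset.range (2*n)) (p := fun k => k < n)
    rw [h1] at this
    simp at this ⊢
    omega
  simp only [not_lt] at h2
  simp [h1, h2]

lemma myEps_pow_sum (n : ℕ) {k : ℕ} (hk : Odd k) :
    ∑ i : Fin (2*n), (myEps n i) ^ k = 0 := by
  have h : ∀ i : Fin (2*n), (myEps n i) ^ k = myEps n i := by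
    intro i
    unfold myEps
    split_ifs
    · simp
    · exact hk.neg_one_pow
  simp_rw [h]
  exact myEps_sum n

lemma myBlock (n : ℕ) (i j : Fin (2*n)) : blockMat n i j = myEps n i * myEps n j := by
  by_cases hi : (i:ℕ) < n <;> by_cases hj : (j:ℕ) < n <;>
    simp [blockMat, myEps, hi, hj]

/-- The degree of `v` in a set `T` of ordered pairs. -/
def degIn {V : Type} [DecidableEq V] (T : Finset (V × V)) (v : V) : ℕ :=
  (T.filter (fun p => p.1 = v)).card + (T.filter (fun p => p.2 = v)).card

variable {V : Type} [Fintype V] [DecidableEq V]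

lemma prod_fst_eq (g : V → ℝ) (T : Finset (V × V)) :
    ∏ p ∈ T, g p.1 = ∏ v : V, g v ^ (T.filter (fun p => p.1 = v)).card := by
  rw [Finset.prod_comp (s := T) g (Prod.fst : V × V → V)]
  refine Finset.prod_subset (Finset.subset_univ _) ?_
  intro v _ hv
  have h0 : (T.filter (fun p => p.1 = v)).card = 0 := by
    rw [Finset.card_eq_zero, Finset.filter_eq_empty_iff]
    exact fun p hp h => hv (Finset.mem_image.2 ⟨p, hp, h⟩)
  simp [h0]

lemma prod_snd_eq (g : V → ℝ) (T : Finset (V × V)) :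
    ∏ p ∈ T, g p.2 = ∏ v : V, g v ^ (T.filter (fun p => p.2 = v)).card := by
  rw [Finset.prod_comp (s := T) g (Prod.snd : V × V → V)]
  refine Finset.prod_subset (Finset.subset_univ _) ?_
  intro v _ hv
  have h0 : (T.filter (fun p => p.2 = v)).card = 0 := by
    rw [Finset.card_eq_zero, Finset.filter_eq_empty_iff]
    exact fun p hp h => hv (Finset.mem_image.2 ⟨p, hp, h⟩)
  simp [h0]

lemma prod_pair_eq (g : V → ℝ) (T : Finset (V × V)) :
    ∏ p ∈ T, g p.1 * g p.2 = ∏ v : V, g v ^ degIn T v := by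
  rw [Finset.prod_mul_distrib, prod_fst_eq, prod_snd_eq, ← Finset.prod_mul_distrib]
  simp [degIn, pow_add]

lemma degIn_union (A B : Finset (V × V)) (h : Disjoint A B) (v : V) :
    degIn (A ∪ B) v = degIn A v + degIn B v := by
  unfold degIn
  rw [Finset.filter_union, Finset.filter_union,
    Finset.card_union_of_disjoint (Finset.disjoint_filter_filter h),
    Finset.card_union_of_disjoint (Finset.disjoint_filter_filter h)]
  ring

lemma degIn_singleton (e : V × V) (v : V) :
    degIn {e} v = (if e.1 = v then 1 else 0) + (if e.2 = v then 1 else 0) := by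
  unfold degIn
  rw [Finset.filter_singleton, Finset.filter_singleton]
  split_ifs <;> simp

end AuxEulerian

section DegLemmas

open Finset

variable {V : Type} [Fintype V] [LinearOrder V]

/-- The degree in the ordered-pairs edge set equals the graph degree. -/
lemma degIn_full (H : SimpleGraph V) [DecidableRel H.Adj] (v : V) :
    degIn (Finset.univ.filter (fun p : V × V => p.1 < p.2 ∧ H.Adj p.1 p.2)) v
      = H.degree v := by
  classical
  set E := Finset.univ.filter (fun p : V × V => p.1 < p.2 ∧ H.Adj p.1 p.2) with hE
  have h1 : (E.filter (fun p => p.1 = v)).card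
      = (Finset.univ.filter (fun u => H.Adj v u ∧ v < u)).card := by
    apply Finset.card_bij (fun p _ => p.2)
    · intro p hp
      simp only [hE, Finset.mem_filter, Finset.mem_univ, true_and] at hp ⊢
      obtain ⟨⟨hlt, hadj⟩, h1⟩ := hp
      subst h1
      exact ⟨hadj, hlt⟩
    · intro p hp q hq hpq
      simp only [hE, Finset.mem_filter] at hp hq
      exact Prod.ext (hp.2.trans hq.2.symm) hpq
    · intro u hu
      simp only [Finset.mem_filter, Finset.mem_univ, true_and] at hu
      exact ⟨(v, u), by simp [hE, hu.1, hu.2], rfl⟩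
  have h2 : (E.filter (fun p => p.2 = v)).card
      = (Finset.univ.filter (fun u => H.Adj v u ∧ u < v)).card := by
    apply Finset.card_bij (fun p _ => p.1)
    · intro p hp
      simp only [hE, Finset.mem_filter, Finset.mem_univ, true_and] at hp ⊢
      obtain ⟨⟨hlt, hadj⟩, h1⟩ := hp
      subst h1
      exact ⟨hadj.symm, hlt⟩
    · intro p hp q hq hpq
      simp only [hE, Finset.mem_filter] at hp hq
      exact Prod.ext hpq (hp.2.trans hq.2.symm)
    · intro u hu
      simp only [Finset.mem_filter, Finset.mem_univ, true_and] at hu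
      exact ⟨(u, v), by simp [hE, hu.1.symm, hu.2], rfl⟩
  have h3 : H.degree v
      = (Finset.univ.filter (fun u => H.Adj v u ∧ v < u)).card
        + (Finset.univ.filter (fun u => H.Adj v u ∧ u < v)).card := by
    classical
    have e1 : (Finset.univ.filter (H.Adj v)).filter (fun u => v < u)
        = Finset.univ.filter (fun u => H.Adj v u ∧ v < u) := by
      rw [Finset.filter_filter]
    have e2 : (Finset.univ.filter (H.Adj v)).filter (fun u => ¬ v < u)
        = Finset.univ.filter (fun u => H.Adj v u ∧ u < v) := by
      rw [Finset.filter_filter]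
      ext u
      simp only [Finset.mem_filter, Finset.mem_univ, true_and, not_lt]
      constructor
      · rintro ⟨hadj, hle⟩
        exact ⟨hadj, lt_of_le_of_ne hle (fun h => H.irrefl (h ▸ hadj))⟩
      · rintro ⟨hadj, hlt⟩
        exact ⟨hadj, le_of_lt hlt⟩
    rw [SimpleGraph.degree, SimpleGraph.neighborFinset_eq_filter,
      ← Finset.card_filter_add_card_filter_not
        (s := Finset.univ.filter (H.Adj v)) (p := fun u => v < u), e1, e2]
  rw [degIn, h1, h2, h3]

end DegLemmas

section ParityLemma

open Finset

variable {V : Type} [Fintype V] [LinearOrder V]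

lemma exists_odd_deg (H : SimpleGraph V) [DecidableRel H.Adj]
    (heul : ∀ v : V, Even (H.degree v))
    (T : Finset (V × V))
    (hT : T ∈ (Finset.univ.filter
      (fun p : V × V => p.1 < p.2 ∧ H.Adj p.1 p.2)).powersetCard
        ((Finset.univ.filter (fun p : V × V => p.1 < p.2 ∧ H.Adj p.1 p.2)).card - 2))
    (he : 2 ≤ (Finset.univ.filter (fun p : V × V => p.1 < p.2 ∧ H.Adj p.1 p.2)).card) :
    ∃ w : V, Odd (degIn T w) := by
  classical
  set E := Finset.univ.filter (fun p : V × V => p.1 < p.2 ∧ H.Adj p.1 p.2) with hE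
  rw [Finset.mem_powersetCard] at hT
  obtain ⟨hsub, hcard⟩ := hT
  have hD : (E \ T).card = 2 := by
    rw [Finset.card_sdiff_of_subset hsub, hcard]
    omega
  obtain ⟨e, f, hef, hDef⟩ := Finset.card_eq_two.1 hD
  have heE : e ∈ E := Finset.sdiff_subset (hDef ▸ Finset.mem_insert_self e {f})
  have hfE : f ∈ E := Finset.sdiff_subset
    (hDef ▸ Finset.mem_insert_of_mem (Finset.mem_singleton_self f))
  have he12 : e.1 < e.2 := (Finset.mem_filter.1 heE).2.1
  have hf12 : f.1 < f.2 := (Finset.mem_filter.1 hfE).2.1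
  -- pick a vertex of e avoiding f
  have hw : ∃ w : V, ((e.1 = w ∧ e.2 ≠ w) ∨ (e.2 = w ∧ e.1 ≠ w)) ∧ f.1 ≠ w ∧ f.2 ≠ w := by
    by_cases h1 : e.1 = f.1 ∨ e.1 = f.2
    · refine ⟨e.2, Or.inr ⟨rfl, ne_of_lt he12⟩, ?_, ?_⟩
      · rcases h1 with h | h
        · exact ne_of_lt (h ▸ he12)
        · exact ne_of_lt (lt_trans (h ▸ hf12) he12)
      · rcases h1 with h | h
        · intro hc
          exact hef (Prod.ext h hc.symm)
        · exact ne_of_lt (h ▸ he12)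
    · push_neg at h1
      exact ⟨e.1, Or.inl ⟨rfl, (ne_of_lt he12).symm⟩, h1.1.symm, h1.2.symm⟩
  obtain ⟨w, hwe, hwf1, hwf2⟩ := hw
  refine ⟨w, ?_⟩
  have hunion : T ∪ (E \ T) = E := Finset.union_sdiff_of_subset hsub
  have hdisj : Disjoint T (E \ T) := Finset.disjoint_sdiff
  have hEdeg : degIn E w = degIn T w + degIn (E \ T) w := by
    conv_lhs => rw [← hunion]
    rw [degIn_union _ _ hdisj]
  have hDdeg : degIn (E \ T) w = 1 := by
    rw [hDef]
    have : ({e, f} : Finset (V × V)) = {e} ∪ {f} := rfl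
    rw [this, degIn_union _ _ (Finset.disjoint_singleton.2 hef),
      degIn_singleton, degIn_singleton]
    rcases hwe with ⟨h1, h2⟩ | ⟨h1, h2⟩ <;>
      simp [h1, h2, hwf1, hwf2]
  have hEfull : degIn E w = H.degree w := degIn_full H w
  have heven : Even (degIn T w + 1) := by
    rw [← hDdeg, ← hEdeg, hEfull]
    exact heul w
  rw [Nat.even_add_one] at heven
  exact Nat.not_even_iff_odd.1 heven

end ParityLemma

-- STATEMENT 18
theorem eulerian_second_deriv_vanishes {V : Type} [Fintype V] [LinearOrder V]
    (H : SimpleGraph V) [DecidableRel H.Adj]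
    (heul : ∀ v : V, Even (H.degree v)) (he : 2 ≤ edgeCount H)
    (n : ℕ) (hn : 1 ≤ n) :
    iteratedDeriv 2
      (fun s : ℝ => graphPoly H (blockMat n + s • onesMat (2*n))) 0 = 0 := by
  classical
  set E := Finset.univ.filter (fun p : V × V => p.1 < p.2 ∧ H.Adj p.1 p.2) with hEdef
  have hEcard : edgeCount H = E.card := rfl
  set P : Polynomial ℝ := ∑ φ : V → Fin (2*n),
      ∏ p ∈ E, (Polynomial.X + Polynomial.C (blockMat n (φ p.1) (φ p.2))) with hP
  have hfun : (fun s : ℝ => graphPoly H (blockMat n + s • onesMat (2*n)))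
      = fun s => P.eval s := by
    funext s
    rw [hP, Polynomial.eval_finset_sum]
    unfold graphPoly
    refine Finset.sum_congr rfl fun φ _ => ?_
    rw [Polynomial.eval_prod]
    refine Finset.prod_congr rfl fun p _ => ?_
    simp only [Polynomial.eval_add, Polynomial.eval_X, Polynomial.eval_C,
      Matrix.add_apply, Matrix.smul_apply, onesMat, Matrix.of_apply, smul_eq_mul]
    ring
  have hPderiv : iteratedDeriv 2 (fun s : ℝ => P.eval s) 0 = P.coeff 2 * 2 := by
    have hd1 : deriv (fun s : ℝ => P.eval s)
        = fun s => (Polynomial.derivative P).eval s :=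
      funext fun x => Polynomial.deriv (p := P) (x := x)
    have h2 : iteratedDeriv 2 (fun s : ℝ => P.eval s) 0
        = (Polynomial.derivative (Polynomial.derivative P)).eval 0 := by
      rw [show (2:ℕ) = 1 + 1 from rfl, iteratedDeriv_succ, iteratedDeriv_one, hd1]
      exact Polynomial.deriv (p := Polynomial.derivative P) (x := 0)
    rw [h2, ← Polynomial.coeff_zero_eq_eval_zero,
      Polynomial.coeff_derivative, Polynomial.coeff_derivative]
    push_cast
    ring
  rw [hfun, hPderiv]
  have hcoeff : P.coeff 2 = 0 := by
    rw [hP, Polynomial.finset_sum_coeff]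
    have h2le : 2 ≤ E.card := hEcard ▸ he
    have hcexp : ∀ φ : V → Fin (2*n),
        (∏ p ∈ E, (Polynomial.X + Polynomial.C (blockMat n (φ p.1) (φ p.2)))).coeff 2
          = ∑ t ∈ E.powersetCard (E.card - 2), ∏ p ∈ t, blockMat n (φ p.1) (φ p.2) :=
      fun φ => Finset.prod_X_add_C_coeff E _ h2le
    simp_rw [hcexp]
    rw [Finset.sum_comm]
    refine Finset.sum_eq_zero fun T hT => ?_
    obtain ⟨w, hw⟩ := exists_odd_deg H heul T hT h2le
    calc ∑ φ : V → Fin (2*n), ∏ p ∈ T, blockMat n (φ p.1) (φ p.2)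
        = ∑ φ : V → Fin (2*n), ∏ v : V, myEps n (φ v) ^ degIn T v := by
          refine Finset.sum_congr rfl fun φ _ => ?_
          rw [← prod_pair_eq (fun v => myEps n (φ v)) T]
          exact Finset.prod_congr rfl fun p _ => myBlock n (φ p.1) (φ p.2)
      _ = ∏ v : V, ∑ i : Fin (2*n), myEps n i ^ degIn T v :=
          (Fintype.prod_sum (fun (v : V) (i : Fin (2*n)) => myEps n i ^ degIn T v)).symm
      _ = 0 := Finset.prod_eq_zero (Finset.mem_univ w) (myEps_pow_sum n hw)
  rw [hcoeff]
  ring
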